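/- Let 1 < r < ∞ and define γ := Σ_{j=0}^∞ 2^{-j/r} and the sequence λ_0 = γ, λ_m = γ - Σ_{j=0}^{k} 2^{-j/r} for 2^k ≤ m ≤ 2^{k+1}-1 (k ∈ ℕ₀), extended evenly to negative indices. Then: (a) λ_m → 0 as m → ∞; (b) for every k ∈ ℕ₀, 2^{k/r} Σ_{m=2^k}^{2^{k+1}-1} |λ_m - λ_{m-1}| = 1; (c) the sequence (2^k - 1)^{1/r+1} |λ_{2^k - 1} - λ_{2^k}| = ((2^k-1)/2^k)^{1/r} (2^k - 1) is unbounded in k. -/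

import Mathlib

open Filter

/-- for `γ = Σ_{j≥0} 2^{-j/r}` and the sequence which equals
`γ - Σ_{j=0}^k 2^{-j/r}` on the dyadic block `{2^k, ..., 2^{k+1}-1}` (extended evenly):
(a) `λ_m → 0`; (b) `2^{k/r} Σ_{m=2^k}^{2^{k+1}-1} |λ_m - λ_{m-1}| = 1` for every `k`;
(c) `(2^k-1)^{1/r+1} |λ_{2^k-1} - λ_{2^k}| = ((2^k-1)/2^k)^{1/r} (2^k-1)`, which is
unbounded in `k`. -/
theorem example_dyadic_variation (r : ℝ) (hr : 1 < r) (γ : ℝ)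
    (hγ : γ = ∑' j : ℕ, (2 : ℝ) ^ (-(j : ℝ) / r))
    (lam : ℤ → ℝ) (h0 : lam 0 = γ)
    (hblock : ∀ k : ℕ, ∀ m : ℤ, (2 : ℤ) ^ k ≤ m → m ≤ 2 ^ (k + 1) - 1 →
      lam m = γ - ∑ j ∈ Finset.range (k + 1), (2 : ℝ) ^ (-(j : ℝ) / r))
    (heven : ∀ m : ℤ, lam (-m) = lam m) :
    Tendsto (fun m : ℕ => lam m) atTop (nhds 0) ∧
      (∀ k : ℕ, (2 : ℝ) ^ ((k : ℝ) / r) *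
          ∑ m ∈ Finset.Icc ((2 : ℤ) ^ k) (2 ^ (k + 1) - 1), |lam m - lam (m - 1)| = 1) ∧
      (∀ k : ℕ, ((2 : ℝ) ^ k - 1) ^ (1 / r + 1) * |lam (2 ^ k - 1) - lam (2 ^ k)| =
          (((2 : ℝ) ^ k - 1) / 2 ^ k) ^ (1 / r) * ((2 : ℝ) ^ k - 1)) ∧
      ¬ ∃ B : ℝ, ∀ k : ℕ,
          ((2 : ℝ) ^ k - 1) ^ (1 / r + 1) * |lam (2 ^ k - 1) - lam (2 ^ k)| ≤ B := by
  have h2r : (0:ℝ) < r := lt_trans one_pos hr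
  set f : ℕ → ℝ := fun j => (2 : ℝ) ^ (-(j : ℝ) / r) with hf
  set S : ℕ → ℝ := fun k => ∑ j ∈ Finset.range (k+1), f j with hS
  have hfpos : ∀ j : ℕ, 0 < f j := fun j => Real.rpow_pos_of_pos (by norm_num) _
  have hgeo : ∀ j : ℕ, f j = ((2:ℝ) ^ (-(1:ℝ)/r)) ^ j := by
    intro j
    rw [hf]
    simp only
    rw [← Real.rpow_natCast ((2:ℝ) ^ (-(1:ℝ)/r)) j, ← Real.rpow_mul (by norm_num)]
    ring_nf
  have hrat0 : (0:ℝ) < (2:ℝ) ^ (-(1:ℝ)/r) := Real.rpow_pos_of_pos (by norm_num) _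
  have hrat1 : (2:ℝ) ^ (-(1:ℝ)/r) < 1 :=
    Real.rpow_lt_one_of_one_lt_of_neg (by norm_num)
      (div_neg_of_neg_of_pos (by norm_num) h2r)
  have hsum : Summable f :=
    (summable_geometric_of_lt_one hrat0.le hrat1).congr (fun j => (hgeo j).symm)
  have hγsum : HasSum f γ := hγ ▸ hsum.hasSum
  -- pow bounds in ℤ
  have hle : ∀ k : ℕ, (2:ℤ)^k ≤ 2^(k+1) - 1 := by
    intro k
    have h1 : (1:ℤ) ≤ 2^k := one_le_pow₀ (by norm_num)
    have h2 : (2:ℤ)^(k+1) = 2 * 2^k := by ring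
    linarith
  -- value on blocks from naturals
  have hval : ∀ m : ℕ, 1 ≤ m → lam m = γ - S (Nat.log 2 m) := by
    intro m hm
    have h1 : 2 ^ Nat.log 2 m ≤ m := Nat.pow_log_le_self 2 (by omega)
    have h2 : m < 2 ^ (Nat.log 2 m + 1) := Nat.lt_pow_succ_log_self (by norm_num) m
    have h2' : (m:ℤ) < 2 ^ (Nat.log 2 m + 1) := by exact_mod_cast h2
    exact hblock (Nat.log 2 m) m (by exact_mod_cast h1) (by omega)
  -- (a)
  have htail : Tendsto (fun k => γ - S k) atTop (nhds 0) := by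
    have h1 : Tendsto (fun n => ∑ j ∈ Finset.range n, f j) atTop (nhds γ) :=
      hγsum.tendsto_sum_nat
    have h2 : Tendsto S atTop (nhds γ) := h1.comp (tendsto_add_atTop_nat 1)
    simpa using h2.const_sub γ
  have hlog : Tendsto (Nat.log 2) atTop atTop := by
    refine tendsto_atTop_atTop.2 fun N => ⟨2^N, fun m hm => ?_⟩
    have hm0 : m ≠ 0 := by have : 1 ≤ 2^N := Nat.one_le_two_pow; omega
    exact (Nat.le_log_iff_pow_le one_lt_two hm0).2 hm
  have ha : Tendsto (fun m : ℕ => lam m) atTop (nhds 0) := by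
    refine (htail.comp hlog).congr' ?_
    filter_upwards [eventually_ge_atTop 1] with m hm
    exact (hval m hm).symm
  -- the key jump computation
  have hdiff : ∀ k : ℕ, lam ((2:ℤ)^k - 1) - lam (2^k) = f k := by
    intro k
    have hk2 : lam ((2:ℤ)^k) = γ - S k := hblock k (2^k) le_rfl (hle k)
    cases k with
    | zero =>
        have hS0 : S 0 = f 0 := by simp [hS]
        norm_num at hk2 ⊢
        rw [h0, hk2, hS0]
        ring
    | succ k =>
        have h1 : (2:ℤ)^k ≤ 2^(k+1) - 1 := hle k
        have hk1 : lam ((2:ℤ)^(k+1) - 1) = γ - S k := hblock k (2^(k+1) - 1) h1 le_rfl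
        rw [hk1, hk2, hS]
        simp only
        rw [Finset.sum_range_succ (n := k + 1)]
        ring
  have habs : ∀ k : ℕ, |lam ((2:ℤ)^k - 1) - lam (2^k)| = f k := by
    intro k
    rw [hdiff k]
    exact abs_of_pos (hfpos k)
  -- (b)
  have hb : ∀ k : ℕ, (2 : ℝ) ^ ((k : ℝ) / r) *
      ∑ m ∈ Finset.Icc ((2 : ℤ) ^ k) (2 ^ (k + 1) - 1), |lam m - lam (m - 1)| = 1 := by
    intro k
    have hsum1 : ∑ m ∈ Finset.Icc ((2:ℤ)^k) (2^(k+1)-1), |lam m - lam (m-1)| = f k := by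
      rw [Finset.sum_eq_single ((2:ℤ)^k)]
      · rw [abs_sub_comm]; exact habs k
      · intro m hm hne
        rw [Finset.mem_Icc] at hm
        have h1 : (2:ℤ)^k ≤ m - 1 := by
          rcases lt_or_eq_of_le hm.1 with h | h
          · omega
          · exact absurd h.symm hne
        have e1 := hblock k m hm.1 hm.2
        have e2 := hblock k (m-1) h1 (by linarith [hm.2])
        rw [e1, e2, sub_self, abs_zero]
      · intro h
        exact absurd (Finset.mem_Icc.2 ⟨le_rfl, hle k⟩) h
    rw [hsum1, hf]
    simp only
    rw [← Real.rpow_add (by norm_num : (0:ℝ) < 2),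
      show (k:ℝ)/r + -(k:ℝ)/r = 0 by ring, Real.rpow_zero]
  -- (c) identity
  have hc : ∀ k : ℕ, ((2 : ℝ) ^ k - 1) ^ (1 / r + 1) * |lam (2 ^ k - 1) - lam (2 ^ k)| =
      (((2 : ℝ) ^ k - 1) / 2 ^ k) ^ (1 / r) * ((2 : ℝ) ^ k - 1) := by
    intro k
    rw [habs k]
    rcases Nat.eq_zero_or_pos k with hk | hk
    · subst hk
      norm_num
      rw [Real.zero_rpow (by positivity)]
      simp
    · have h2k : (2:ℝ) ≤ (2:ℝ)^k := by
        calc (2:ℝ) = 2^1 := (pow_one 2).symm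
        _ ≤ 2^k := pow_le_pow_right₀ (by norm_num) hk
      have hx : (0:ℝ) < (2:ℝ)^k - 1 := by linarith
      have hpk : (0:ℝ) < (2:ℝ)^k := by positivity
      rw [Real.rpow_add hx, Real.rpow_one,
        Real.div_rpow hx.le hpk.le]
      have e2 : ((2:ℝ)^k) ^ (1/r) = (2:ℝ) ^ ((k:ℝ) * (1/r)) := by
        rw [← Real.rpow_natCast 2 k, ← Real.rpow_mul (by norm_num)]
      have e3 : f k = ((2:ℝ) ^ ((k:ℝ) * (1/r)))⁻¹ := by
        rw [hf]
        simp only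
        rw [← Real.rpow_neg (by norm_num)]
        ring_nf
      rw [e2, e3]
      have hpos : (0:ℝ) < (2:ℝ) ^ ((k:ℝ) * (1/r)) := Real.rpow_pos_of_pos (by norm_num) _
      field_simp
  refine ⟨ha, hb, hc, ?_⟩
  rintro ⟨B, hB⟩
  obtain ⟨n, hn⟩ := pow_unbounded_of_one_lt (2*B + 1) (one_lt_two (α := ℝ))
  have hk := hB (n+1)
  rw [hc (n+1)] at hk
  set x : ℝ := (2:ℝ)^(n+1) - 1 with hxdef
  have hx1 : (2:ℝ) ≤ (2:ℝ)^(n+1) := by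
    calc (2:ℝ) = 2^1 := (pow_one 2).symm
    _ ≤ 2^(n+1) := pow_le_pow_right₀ (by norm_num) (by omega)
  have hx : (1:ℝ) ≤ x := by rw [hxdef]; linarith
  have hpn : (0:ℝ) < (2:ℝ)^(n+1) := by positivity
  have hhalf : (1:ℝ)/2 ≤ x / 2^(n+1) := by
    rw [div_le_div_iff₀ (by norm_num) hpn, hxdef]
    linarith
  have hrle : 1/r ≤ 1 := by
    rw [div_le_one h2r]; exact hr.le
  have hlow : (1:ℝ)/2 ≤ (x / 2^(n+1))^(1/r) := by
    calc (1:ℝ)/2 = ((1:ℝ)/2)^(1:ℝ) := (Real.rpow_one _).symm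
    _ ≤ ((1:ℝ)/2)^(1/r) := Real.rpow_le_rpow_of_exponent_ge (by norm_num) (by norm_num) hrle
    _ ≤ (x/2^(n+1))^(1/r) := Real.rpow_le_rpow (by norm_num) hhalf (by positivity)
  have hmul : (1/2) * x ≤ (x/2^(n+1))^(1/r) * x :=
    mul_le_mul_of_nonneg_right hlow (by linarith)
  have h2n : (2*B+1 : ℝ) < 2^(n+1) :=
    lt_of_lt_of_le hn (pow_le_pow_right₀ (by norm_num) (by omega))
  have : x ≤ 2*B := by linarith
  rw [hxdef] at this
  linarith
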